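/- Let T := {Y ∈ V : g(Y,N) = 0} and B(X) := A X - g(A X, N)·N, φ(X) := J X - g(J X, N)·N. Then for every Y ∈ T, B(B(Y)) = Y + g(A N, Y)·φ(A ξ). If moreover g(A N, ξ) = 0, then A ξ ∈ T and B(A ξ) = ξ; if additionally g(A ξ, ξ) = 0 (𝔄-isotropic normal), then A N ∈ T, B(A N) = 0, and B(B(Y)) = Y - g(A N, Y)·A N for all Y ∈ T. -/

import Mathlib

noncomputable section

variable {V : Type*}

/-- The real inner product `g(x,y) = Re⟨x,y⟩` induced by the Hermitian inner product. -/
def g [NormedAddCommGroup V] [InnerProductSpace ℂ V] (x y : V) : ℝ := (inner ℂ x y : ℂ).re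

/-- The tangential part of `J X` on the hypersurface tangent space. -/
def phi [NormedAddCommGroup V] [InnerProductSpace ℂ V] (N X : V) : V :=
  Complex.I • X - g (Complex.I • X) N • N

/-- The tangential part of `A X` on the hypersurface tangent space. -/
def B [NormedAddCommGroup V] [InnerProductSpace ℂ V] (A : V →ₗ[ℝ] V) (N X : V) : V :=
  A X - g (A X) N • N


section Aux
variable [NormedAddCommGroup V] [InnerProductSpace ℂ V]

lemma g_symm (x y : V) : g x y = g y x := by
  unfold g; exact inner_re_symm (𝕜 := ℂ) x y

lemma g_smul_left (r : ℝ) (x y : V) : g (r • x) y = r * g x y := by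
  unfold g; rw [show r • x = (r : ℂ) • x by simp, inner_smul_left]; simp

lemma g_sub_left (x y z : V) : g (x - y) z = g x z - g y z := by
  unfold g; rw [inner_sub_left]; simp

lemma g_neg_left (x y : V) : g (-x) y = - g x y := by
  unfold g; rw [inner_neg_left]; simp

lemma g_neg_right (x y : V) : g x (-y) = - g x y := by
  unfold g; rw [inner_neg_right]; simp

lemma g_I_left (x y : V) : g (Complex.I • x) y = (inner ℂ x y : ℂ).im := by
  unfold g; rw [inner_smul_left]; simp

lemma g_I_right (x y : V) : g x (Complex.I • y) = -(inner ℂ x y : ℂ).im := by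
  unfold g; rw [inner_smul_right]; simp

lemma I_I_smul (x : V) : Complex.I • Complex.I • x = -x := by
  rw [smul_smul, Complex.I_mul_I, neg_one_smul]

end Aux

/-- For `Y ∈ T`, `B(B(Y)) = Y + g(AN,Y)·φ(Aξ)`. If `g(AN,ξ) = 0` then `Aξ ∈ T` and
`B(Aξ) = ξ`; if moreover `g(Aξ,ξ) = 0` (𝔄-isotropic normal) then `AN ∈ T`, `B(AN) = 0`
and `B(B(Y)) = Y - g(AN,Y)·AN` for all `Y ∈ T`. -/

theorem stmt_15 [NormedAddCommGroup V] [InnerProductSpace ℂ V]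
    (A : V →ₗ[ℝ] V)
    (hA_invol : ∀ x, A (A x) = x)
    (hA_antiJ : ∀ x, A (Complex.I • x) = -(Complex.I • A x))
    (hA_herm : ∀ x y, (inner ℂ (A x) (A y) : ℂ) = inner ℂ y x)
    (N : V) (hN : ‖N‖ = 1)
    (ξ : V) (hξ : ξ = -(Complex.I • N)) :
    (∀ Y : V, g Y N = 0 → B A N (B A N Y) = Y + g (A N) Y • phi N (A ξ)) ∧
    (g (A N) ξ = 0 →
      g (A ξ) N = 0 ∧ B A N (A ξ) = ξ ∧
      (g (A ξ) ξ = 0 →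
        g (A N) N = 0 ∧ B A N (A N) = 0 ∧
        (∀ Y : V, g Y N = 0 → B A N (B A N Y) = Y - g (A N) Y • A N))) := by
  have hAxi : A ξ = Complex.I • A N := by
    rw [hξ, map_neg, hA_antiJ, neg_neg]
  have gA : ∀ x y : V, g (A x) y = g (A y) x := by
    intro x y
    have h := hA_herm x (A y)
    rw [hA_invol] at h
    unfold g; rw [h]
  have hNN : g N N = 1 := by
    unfold g
    rw [← RCLike.re_to_complex, inner_self_eq_norm_sq, hN]
    norm_num
  have hxiN : g ξ N = 0 := by
    rw [hξ, g_neg_left, g_I_left, ← RCLike.im_to_complex, inner_self_im, neg_zero]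
  have main : ∀ Y : V, g Y N = 0 →
      B A N (B A N Y) = Y - g (A N) Y • A N + (g (A N) Y * g (A N) N) • N := by
    intro Y hY
    have ha : g (A Y) N = g (A N) Y := gA Y N
    simp only [B, map_sub, map_smul, hA_invol]
    rw [g_sub_left, g_smul_left, ha, hY]
    module
  have hphi : phi N (A ξ) = -A N + g (A N) N • N := by
    simp only [phi, hAxi, I_I_smul, g_neg_left]
    module
  refine ⟨fun Y hY => by rw [main Y hY, hphi]; module, fun h1 => ?_⟩
  have him : g (A ξ) N = g (A N) ξ := by
    rw [hAxi, hξ, g_I_left, g_neg_right, g_I_right, neg_neg]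
  have hAxiN : g (A ξ) N = 0 := him.trans h1
  refine ⟨hAxiN, ?_, fun h2 => ?_⟩
  · simp only [B, hA_invol, hxiN, zero_smul, sub_zero]
  · have hANN : g (A N) N = 0 := by
      have : g (A ξ) ξ = - g (A N) N := by
        rw [hAxi, hξ, g_I_left]
        rw [show (inner ℂ (A N) (-(Complex.I • N)) : ℂ) = -(Complex.I * inner ℂ (A N) N) by
          rw [inner_neg_right, inner_smul_right]]
        unfold g; simp
      rw [this] at h2
      linarith
    refine ⟨hANN, ?_, fun Y hY => ?_⟩
    · simp only [B, hA_invol, hNN, one_smul, sub_self]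
    · rw [main Y hY, hANN, mul_zero, zero_smul, add_zero]
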